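/- arXiv:1203.5480 — 2 statements merged into one kernel-verified Lean document; each statement's English description precedes it below -/
import Mathlib

section
/- Let f be a bi-univalent function of the class K_σ(φ), i.e. f is bi-univalent with inverse extension F and both 1 + zf''(z)/f'(z) ≺ φ(z) and 1 + wF''(w)/F'(w) ≺ φ(w). Then the second Taylor coefficient of f satisfies |a₂| ≤ min{ √((B₁² + B₁ + |B₂ − B₁|)/6), B₁/2 }. -/
open Metric Set Complex

noncomputable section

open Filter
open scoped Topology


lemma mobius_normSq (b w : ℂ) :
    Complex.normSq (1 - (starRingEnd ℂ) b * w) - Complex.normSq (w - b)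
      = (1 - Complex.normSq b) * (1 - Complex.normSq w) := by
  have h1 := Complex.mul_conj (1 - (starRingEnd ℂ) b * w)
  have h2 := Complex.mul_conj (w - b)
  have h3 := Complex.mul_conj b
  have h4 := Complex.mul_conj w
  have : ((Complex.normSq (1 - (starRingEnd ℂ) b * w) : ℂ)) - (Complex.normSq (w - b) : ℂ)
      = (1 - (Complex.normSq b : ℂ)) * (1 - (Complex.normSq w : ℂ)) := by
    rw [← h1, ← h2, ← h3, ← h4]
    simp only [map_sub, map_mul, map_one, Complex.conj_conj]
    ring
  exact_mod_cast this

lemma mobius_lt_one {b w : ℂ} (hb : ‖b‖ < 1) (hw : ‖w‖ < 1) :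
    ‖(w - b) / (1 - (starRingEnd ℂ) b * w)‖ < 1 := by
  have hb0 := norm_nonneg b
  have hw0 := norm_nonneg w
  have hb' : Complex.normSq b < 1 := by rw [← Complex.sq_norm]; nlinarith
  have hw' : Complex.normSq w < 1 := by rw [← Complex.sq_norm]; nlinarith
  have key := mobius_normSq b w
  have hpos : 0 < Complex.normSq (1 - (starRingEnd ℂ) b * w) := by
    nlinarith [Complex.normSq_nonneg (w - b)]
  have hden : ‖1 - (starRingEnd ℂ) b * w‖ ≠ 0 := by
    rw [← Complex.sq_norm] at hpos
    intro h; rw [h] at hpos; simp at hpos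
  have hdpos : 0 < ‖1 - (starRingEnd ℂ) b * w‖ :=
    lt_of_le_of_ne (norm_nonneg _) (Ne.symm hden)
  rw [norm_div, div_lt_one hdpos]
  have hsq : ‖w - b‖ ^ 2 < ‖1 - (starRingEnd ℂ) b * w‖ ^ 2 := by
    rw [Complex.sq_norm, Complex.sq_norm]; nlinarith
  exact lt_of_pow_lt_pow_left₀ 2 hdpos.le hsq

lemma schwarz_pick_zero {ψ : ℂ → ℂ} (hd : DifferentiableOn ℂ ψ (ball 0 1))
    (hb : ∀ z ∈ ball (0:ℂ) 1, ‖ψ z‖ ≤ 1) :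
    ‖deriv ψ 0‖ ≤ 1 - ‖ψ 0‖ ^ 2 := by
  set A := ‖ψ 0‖ with hA_def
  set D := ‖deriv ψ 0‖ with hD_def
  have hA0 : 0 ≤ A := norm_nonneg _
  have hA1 : A ≤ 1 := hb 0 (mem_ball_self one_pos)
  have step : ∀ ρ : ℝ, ρ ∈ Ioo (0:ℝ) 1 → ρ * D ≤ 1 - ρ^2 * A^2 := by
    intro ρ hρ
    obtain ⟨hρ0, hρ1⟩ := hρ
    set a := ψ 0 with ha_def
    set b := (ρ:ℂ) * a with hb_def
    have habs_b : ‖b‖ = ρ * A := by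
      rw [hb_def, norm_mul, Complex.norm_real, Real.norm_eq_abs, abs_of_pos hρ0]
    have hb_lt : ‖b‖ < 1 := by
      rw [habs_b]; nlinarith
    have habs_w : ∀ z ∈ ball (0:ℂ) 1, ‖(ρ:ℂ) * ψ z‖ ≤ ρ := by
      intro z hz
      rw [norm_mul, Complex.norm_real, Real.norm_eq_abs, abs_of_pos hρ0]
      nlinarith [hb z hz, norm_nonneg (ψ z)]
    set v := fun z => 1 - (starRingEnd ℂ) b * ((ρ:ℂ) * ψ z) with hv_def
    have hv_ne : ∀ z ∈ ball (0:ℂ) 1, v z ≠ 0 := by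
      intro z hz h0
      have : ‖(starRingEnd ℂ) b * ((ρ:ℂ) * ψ z)‖ < 1 := by
        rw [norm_mul, Complex.norm_conj, habs_b]
        nlinarith [habs_w z hz, norm_nonneg ((ρ:ℂ) * ψ z)]
      have h1 : (1:ℂ) = (starRingEnd ℂ) b * ((ρ:ℂ) * ψ z) := by
        rw [hv_def] at h0; linear_combination h0
      rw [← h1] at this; simp at this
    set g := fun z => ((ρ:ℂ) * ψ z - b) / v z with hg_def
    have hg_d : DifferentiableOn ℂ g (ball 0 1) := by
      apply DifferentiableOn.div
      · exact (hd.const_mul _).sub_const b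
      · exact (differentiableOn_const 1).sub ((hd.const_mul _).const_mul _)
      · exact hv_ne
    have hg_maps : MapsTo g (ball 0 1) (ball 0 1) := by
      intro z hz
      rw [mem_ball_zero_iff]
      have := mobius_lt_one hb_lt (lt_of_le_of_lt (habs_w z hz) hρ1)
      simpa [hg_def, hv_def] using this
    have hg0 : g 0 = 0 := by
      simp only [hg_def, hb_def, ha_def]
      rw [sub_self, zero_div]
    have hSch : ‖deriv g 0‖ ≤ 1 :=
      Complex.norm_deriv_le_one_of_mapsTo_ball hg_d (by rw [hg0]; exact hg_maps.mono_right ball_subset_closedBall) one_pos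
    -- compute deriv g 0
    have hψ0 : DifferentiableAt ℂ ψ 0 := hd.differentiableAt (ball_mem_nhds _ one_pos)
    have hu : DifferentiableAt ℂ (fun z => (ρ:ℂ) * ψ z - b) 0 :=
      (hψ0.const_mul _).sub_const b
    have hv' : DifferentiableAt ℂ v 0 :=
      (differentiableAt_const 1).sub ((hψ0.const_mul _).const_mul _)
    have hv0 : v 0 = 1 - ((ρ^2 * A^2 : ℝ) : ℂ) := by
      have : (starRingEnd ℂ) b * ((ρ:ℂ) * ψ 0) = ((Complex.normSq b : ℝ) : ℂ) := by
        rw [← hb_def, ← Complex.normSq_eq_conj_mul_self]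
      rw [hv_def]; simp only []
      rw [this]
      congr 1
      rw [← Complex.sq_norm, habs_b]
      push_cast; ring
    have hv0R : v 0 = ((1 - ρ^2 * A^2 : ℝ) : ℂ) := by rw [hv0]; push_cast; ring
    have hv0ne : v 0 ≠ 0 := hv_ne 0 (mem_ball_self one_pos)
    have hder : deriv g 0 = ((ρ:ℂ) * deriv ψ 0) / v 0 := by
      rw [hg_def]
      rw [deriv_fun_div hu hv' hv0ne]
      have h1 : deriv (fun z => (ρ:ℂ) * ψ z - b) 0 = (ρ:ℂ) * deriv ψ 0 := by
        rw [deriv_sub_const, deriv_const_mul _ hψ0]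
      have h2 : (ρ:ℂ) * ψ 0 - b = 0 := by
        simp only [hb_def, ha_def]; ring
      rw [h1, h2, zero_mul, sub_zero, pow_two]
      rw [mul_comm (v 0) (v 0), ← div_div, mul_div_assoc]
      rw [div_self hv0ne, mul_one]
    have hra : ρ * A < 1 := by nlinarith
    have hpos : 0 < 1 - ρ^2 * A^2 := by nlinarith [mul_nonneg hρ0.le hA0, sq_nonneg (ρ*A)]
    have habsder : ‖deriv g 0‖ = ρ * D / (1 - ρ^2 * A^2) := by
      rw [hder, norm_div, norm_mul, Complex.norm_real, Real.norm_eq_abs, abs_of_pos hρ0, hv0R,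
        Complex.norm_real, Real.norm_eq_abs, abs_of_pos hpos]
    rw [habsder, div_le_one hpos] at hSch
    exact hSch
  -- limit ρ → 1⁻
  have hten : Tendsto (fun ρ : ℝ => (1 - ρ^2 * A^2) / ρ) (𝓝[<] (1:ℝ)) (𝓝 (1 - A^2)) := by
    have : ContinuousAt (fun ρ : ℝ => (1 - ρ^2 * A^2) / ρ) 1 := by
      apply ContinuousAt.div
      · fun_prop
      · fun_prop
      · norm_num
    have h : Tendsto (fun ρ : ℝ => (1 - ρ^2 * A^2) / ρ) (𝓝[<] (1:ℝ)) (𝓝 ((1 - 1^2 * A^2)/1)) :=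
      this.tendsto.mono_left nhdsWithin_le_nhds
    simpa using h
  refine ge_of_tendsto hten ?_
  filter_upwards [Ioo_mem_nhdsLT_of_mem (⟨zero_lt_one, le_refl (1:ℝ)⟩ : (1:ℝ) ∈ Ioc (0:ℝ) 1)] with ρ hρ
  rw [le_div_iff₀ hρ.1]
  linarith [step ρ hρ]
lemma schwarz_coeffs {ω : ℂ → ℂ} (hd : DifferentiableOn ℂ ω (ball 0 1)) (h0 : ω 0 = 0)
    (hm : ∀ z ∈ ball (0:ℂ) 1, ω z ∈ ball (0:ℂ) 1) :
    ‖deriv ω 0‖ ≤ 1 ∧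
    ‖deriv (deriv ω) 0‖ ≤ 2 * (1 - ‖deriv ω 0‖ ^ 2) := by
  set ψ := dslope ω 0 with hψ_def
  have hψd : DifferentiableOn ℂ ψ (ball 0 1) :=
    (differentiableOn_dslope (ball_mem_nhds 0 one_pos)).mpr hd
  have hmaps : MapsTo ω (ball 0 1) (ball (ω 0) 1) := by rw [h0]; exact hm
  have hψb : ∀ z ∈ ball (0:ℂ) 1, ‖ψ z‖ ≤ 1 := by
    intro z hz
    have := Complex.norm_dslope_le_div_of_mapsTo_ball hd (hmaps.mono_right ball_subset_closedBall) hz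
    simpa using this
  have hψ0 : ψ 0 = deriv ω 0 := dslope_same ω 0
  have h1 : ‖deriv ω 0‖ ≤ 1 := by
    rw [← hψ0]; exact hψb 0 (mem_ball_self one_pos)
  refine ⟨h1, ?_⟩
  have hSP := schwarz_pick_zero hψd hψb
  rw [hψ0] at hSP
  -- ω z = z * ψ z
  have hω_eq : ω = fun z => z * ψ z := by
    funext z
    have := sub_smul_dslope ω 0 z
    simp only [sub_zero, smul_eq_mul, h0] at this
    rw [hψ_def, this]
  have hψa : AnalyticOnNhd ℂ ψ (ball 0 1) := hψd.analyticOnNhd isOpen_ball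
  have hψd' : AnalyticOnNhd ℂ (deriv ψ) (ball 0 1) := hψa.deriv
  have Eω : deriv ω =ᶠ[𝓝 (0:ℂ)] fun z => ψ z + z * deriv ψ z := by
    filter_upwards [isOpen_ball.mem_nhds (mem_ball_self one_pos)] with z hz
    rw [hω_eq]
    rw [deriv_fun_mul differentiableAt_fun_id ((hψa z hz).differentiableAt)]
    simp
  have h2 : deriv (deriv ω) 0 = 2 * deriv ψ 0 := by
    rw [Eω.deriv_eq]
    have hd1 : DifferentiableAt ℂ ψ 0 := (hψa 0 (mem_ball_self one_pos)).differentiableAt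
    have hd2 : DifferentiableAt ℂ (deriv ψ) 0 := (hψd' 0 (mem_ball_self one_pos)).differentiableAt
    rw [deriv_fun_add hd1 (differentiableAt_fun_id.fun_mul hd2)]
    rw [deriv_fun_mul differentiableAt_fun_id hd2]
    simp; ring
  rw [h2, norm_mul]
  simp only [Complex.norm_two]
  nlinarith [hSP]

lemma subord_coeffs {f φ ω : ℂ → ℂ} {B₁ B₂ : ℝ}
    (hf : DifferentiableOn ℂ f (ball 0 1)) (hf1 : deriv f 0 = 1)
    (hφ : DifferentiableOn ℂ φ (ball 0 1))
    (hφ1 : deriv φ 0 = (B₁:ℂ)) (hφ2 : iteratedDeriv 2 φ 0 = 2*(B₂:ℂ))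
    (hωd : DifferentiableOn ℂ ω (ball 0 1)) (hω0 : ω 0 = 0)
    (hωm : ∀ z ∈ ball (0:ℂ) 1, ω z ∈ ball (0:ℂ) 1)
    (heq : ∀ z ∈ ball (0:ℂ) 1, 1 + z * deriv (deriv f) z / deriv f z = φ (ω z)) :
    deriv (deriv f) 0 = (B₁:ℂ) * deriv ω 0 ∧
    2*(deriv (deriv (deriv f)) 0 - (deriv (deriv f) 0)^2)
      = 2*(B₂:ℂ)*(deriv ω 0)^2 + (B₁:ℂ)*(deriv (deriv ω) 0) := by
  have h0mem : (0:ℂ) ∈ ball (0:ℂ) 1 := mem_ball_self one_pos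
  have hfa : AnalyticOnNhd ℂ f (ball 0 1) := hf.analyticOnNhd isOpen_ball
  have hf1a : AnalyticOnNhd ℂ (deriv f) (ball 0 1) := hfa.deriv
  have hf2a : AnalyticOnNhd ℂ (deriv (deriv f)) (ball 0 1) := hf1a.deriv
  have hφa : AnalyticOnNhd ℂ φ (ball 0 1) := hφ.analyticOnNhd isOpen_ball
  have hφ1a : AnalyticOnNhd ℂ (deriv φ) (ball 0 1) := hφa.deriv
  have hωa : AnalyticOnNhd ℂ ω (ball 0 1) := hωd.analyticOnNhd isOpen_ball
  have hω1a : AnalyticOnNhd ℂ (deriv ω) (ball 0 1) := hωa.deriv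
  have hne : ∀ᶠ z in 𝓝 (0:ℂ), deriv f z ≠ 0 ∧ z ∈ ball (0:ℂ) 1 := by
    have h1 : ∀ᶠ z in 𝓝 (0:ℂ), deriv f z ≠ 0 :=
      (hf1a 0 h0mem).continuousAt.eventually_ne (by rw [hf1]; exact one_ne_zero)
    exact h1.and (isOpen_ball.mem_nhds h0mem)
  obtain ⟨r, hr0, hrp⟩ := Metric.eventually_nhds_iff_ball.mp hne
  have hrm : ball (0:ℂ) r ∈ 𝓝 (0:ℂ) := ball_mem_nhds _ hr0
  have h0r : (0:ℂ) ∈ ball (0:ℂ) r := mem_ball_self hr0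
  set u := fun z => deriv (deriv f) z / deriv f z with hu_def
  have hua : AnalyticOnNhd ℂ u (ball 0 r) := fun z hz =>
    (hf2a z (hrp z hz).2).div (hf1a z (hrp z hz).2) (hrp z hz).1
  have hu'a : AnalyticOnNhd ℂ (deriv u) (ball 0 r) := hua.deriv
  set g := fun z => 1 + z * u z with hg_def
  have heq' : g =ᶠ[𝓝 (0:ℂ)] (φ ∘ ω) := by
    filter_upwards [isOpen_ball.mem_nhds h0mem] with z hz
    have := heq z hz
    simp only [hg_def, hu_def, Function.comp_apply]
    rw [← mul_div_assoc] at *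
    exact this
  have hEg : deriv g =ᶠ[𝓝 (0:ℂ)] fun z => u z + z * deriv u z := by
    filter_upwards [hrm] with z hz
    have hdu : DifferentiableAt ℂ u z := (hua z hz).differentiableAt
    rw [hg_def]
    rw [deriv_const_add]
    rw [deriv_fun_mul differentiableAt_fun_id hdu]
    simp
  have hu0v : u 0 = deriv (deriv f) 0 := by
    simp only [hu_def]; rw [hf1, div_one]
  have hg1 : deriv g 0 = deriv (deriv f) 0 := by
    rw [hEg.self_of_nhds]; simp only []; rw [zero_mul, add_zero, hu0v]
  have hdu0 : DifferentiableAt ℂ u 0 := (hua 0 h0r).differentiableAt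
  have hdu'0 : DifferentiableAt ℂ (deriv u) 0 := (hu'a 0 h0r).differentiableAt
  have hg2 : deriv (deriv g) 0 = 2 * deriv u 0 := by
    rw [hEg.deriv_eq]
    rw [deriv_fun_add hdu0 (differentiableAt_fun_id.fun_mul hdu'0)]
    rw [deriv_fun_mul differentiableAt_fun_id hdu'0]
    simp; ring
  have hu0 : deriv u 0 = deriv (deriv (deriv f)) 0 - (deriv (deriv f) 0)^2 := by
    rw [hu_def]
    rw [deriv_fun_div ((hf2a 0 h0mem).differentiableAt) ((hf1a 0 h0mem).differentiableAt)
      (by rw [hf1]; exact one_ne_zero)]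
    rw [hf1]
    ring
  have hEr : deriv (φ ∘ ω) =ᶠ[𝓝 (0:ℂ)] fun z => deriv φ (ω z) * deriv ω z := by
    filter_upwards [isOpen_ball.mem_nhds h0mem] with z hz
    exact deriv_comp z ((hφa (ω z) (hωm z hz)).differentiableAt) ((hωa z hz).differentiableAt)
  have hr1 : deriv (φ ∘ ω) 0 = (B₁:ℂ) * deriv ω 0 := by
    rw [hEr.self_of_nhds]; simp only []; rw [hω0, hφ1]
  have hφφ : deriv (deriv φ) 0 = 2*(B₂:ℂ) := by
    rw [← hφ2, iteratedDeriv_succ, iteratedDeriv_one]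
  have hc1 : DifferentiableAt ℂ (fun z => deriv φ (ω z)) 0 := by
    have := ((hφ1a (ω 0) (by rw [hω0]; exact h0mem)).differentiableAt).comp 0
      ((hωa 0 h0mem).differentiableAt)
    exact this
  have hcderiv : deriv (fun z => deriv φ (ω z)) 0 = deriv (deriv φ) (ω 0) * deriv ω 0 :=
    deriv_comp 0 ((hφ1a (ω 0) (by rw [hω0]; exact h0mem)).differentiableAt)
      ((hωa 0 h0mem).differentiableAt)
  have hr2 : deriv (deriv (φ ∘ ω)) 0
      = 2*(B₂:ℂ)*(deriv ω 0)^2 + (B₁:ℂ)*(deriv (deriv ω) 0) := by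
    rw [hEr.deriv_eq]
    rw [deriv_fun_mul hc1 ((hω1a 0 h0mem).differentiableAt)]
    rw [hcderiv, hω0, hφφ, hφ1]
    ring
  constructor
  · rw [← hg1, heq'.deriv_eq, hr1]
  · have : deriv (deriv g) 0 = deriv (deriv (φ ∘ ω)) 0 := (heq'.deriv).deriv_eq
    rw [hg2, hu0] at this
    rw [hr2] at this
    linear_combination this

lemma inverse_coeffs {f F : ℂ → ℂ}
    (hf : DifferentiableOn ℂ f (ball 0 1)) (hf0 : f 0 = 0) (hf1 : deriv f 0 = 1)
    (hF : DifferentiableOn ℂ F (ball 0 1))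
    (hFf : ∀ᶠ z in nhds (0:ℂ), F (f z) = z) :
    deriv F 0 = 1 ∧ deriv (deriv F) 0 = - deriv (deriv f) 0 ∧
    deriv (deriv (deriv F)) 0 = 3 * (deriv (deriv f) 0)^2 - deriv (deriv (deriv f)) 0 := by
  have h0mem : (0:ℂ) ∈ ball (0:ℂ) 1 := mem_ball_self one_pos
  have hfa : AnalyticOnNhd ℂ f (ball 0 1) := hf.analyticOnNhd isOpen_ball
  have hf1a : AnalyticOnNhd ℂ (deriv f) (ball 0 1) := hfa.deriv
  have hf2a : AnalyticOnNhd ℂ (deriv (deriv f)) (ball 0 1) := hf1a.deriv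
  have hFa : AnalyticOnNhd ℂ F (ball 0 1) := hF.analyticOnNhd isOpen_ball
  have hF1a : AnalyticOnNhd ℂ (deriv F) (ball 0 1) := hFa.deriv
  have hF2a : AnalyticOnNhd ℂ (deriv (deriv F)) (ball 0 1) := hF1a.deriv
  have hcont : ContinuousAt f 0 := (hfa 0 h0mem).continuousAt
  have hfm : ∀ᶠ z in 𝓝 (0:ℂ), f z ∈ ball (0:ℂ) 1 := by
    apply hcont.eventually_mem
    rw [hf0]; exact isOpen_ball.mem_nhds h0mem
  have hev : ∀ᶠ z in 𝓝 (0:ℂ), z ∈ ball (0:ℂ) 1 ∧ f z ∈ ball (0:ℂ) 1 :=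
    (isOpen_ball.eventually_mem h0mem).and hfm
  have hFfE : (fun z => F (f z)) =ᶠ[𝓝 (0:ℂ)] (fun z => z) := hFf
  have E1 : deriv (fun z => F (f z)) =ᶠ[𝓝 (0:ℂ)] fun z => deriv F (f z) * deriv f z := by
    filter_upwards [hev] with z hz
    have h := deriv_comp z ((hFa (f z) hz.2).differentiableAt) ((hfa z hz.1).differentiableAt)
    simpa [Function.comp_def] using h
  have hD1 : (fun z => deriv F (f z) * deriv f z) =ᶠ[𝓝 (0:ℂ)] (fun _ => (1:ℂ)) := by
    have h := hFfE.deriv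
    rw [deriv_id''] at h
    exact E1.symm.trans h
  have hF1 : deriv F 0 = 1 := by
    have := hD1.self_of_nhds
    simp only [hf0, hf1, mul_one] at this
    exact this
  -- second derivative
  have E2 : deriv (fun z => deriv F (f z) * deriv f z) =ᶠ[𝓝 (0:ℂ)]
      fun z => (deriv (deriv F) (f z) * deriv f z) * deriv f z
        + deriv F (f z) * deriv (deriv f) z := by
    filter_upwards [hev] with z hz
    have hc : DifferentiableAt ℂ (fun w => deriv F (f w)) z :=
      ((hF1a (f z) hz.2).differentiableAt).comp z ((hfa z hz.1).differentiableAt)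
    rw [deriv_fun_mul hc ((hf1a z hz.1).differentiableAt)]
    have hcd : deriv (fun w => deriv F (f w)) z = deriv (deriv F) (f z) * deriv f z := by
      have h := deriv_comp z ((hF1a (f z) hz.2).differentiableAt) ((hfa z hz.1).differentiableAt)
      simpa [Function.comp_def] using h
    rw [hcd]
  have hD2 : (fun z => (deriv (deriv F) (f z) * deriv f z) * deriv f z
      + deriv F (f z) * deriv (deriv f) z) =ᶠ[𝓝 (0:ℂ)] (fun _ => (0:ℂ)) := by
    have h := hD1.deriv
    rw [deriv_const'] at h
    exact E2.symm.trans h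
  have hF2 : deriv (deriv F) 0 = - deriv (deriv f) 0 := by
    have := hD2.self_of_nhds
    simp only [hf0, hf1, hF1, mul_one, one_mul] at this
    linear_combination this
  -- third derivative
  have hdF2f : ∀ᶠ z in 𝓝 (0:ℂ), DifferentiableAt ℂ (fun w => deriv (deriv F) (f w)) z := by
    filter_upwards [hev] with z hz
    exact ((hF2a (f z) hz.2).differentiableAt).comp z ((hfa z hz.1).differentiableAt)
  have hzero : deriv (fun z => (deriv (deriv F) (f z) * deriv f z) * deriv f z
      + deriv F (f z) * deriv (deriv f) z) 0 = 0 := by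
    rw [hD2.deriv_eq, deriv_const']
  -- compute the LHS derivative at 0
  have hdf0 : DifferentiableAt ℂ f 0 := (hfa 0 h0mem).differentiableAt
  have hdf1 : DifferentiableAt ℂ (deriv f) 0 := (hf1a 0 h0mem).differentiableAt
  have hdf2 : DifferentiableAt ℂ (deriv (deriv f)) 0 := (hf2a 0 h0mem).differentiableAt
  have hm0 : f 0 ∈ ball (0:ℂ) 1 := by rw [hf0]; exact h0mem
  have hdF1f : DifferentiableAt ℂ (fun w => deriv F (f w)) 0 :=
    ((hF1a (f 0) hm0).differentiableAt).comp 0 hdf0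
  have hdF2f0 : DifferentiableAt ℂ (fun w => deriv (deriv F) (f w)) 0 :=
    ((hF2a (f 0) hm0).differentiableAt).comp 0 hdf0
  have c1 : deriv (fun w => deriv (deriv F) (f w)) 0
      = deriv (deriv (deriv F)) (f 0) * deriv f 0 := by
    have h := deriv_comp 0 ((hF2a (f 0) hm0).differentiableAt) hdf0
    simpa [Function.comp_def] using h
  have c2 : deriv (fun w => deriv F (f w)) 0 = deriv (deriv F) (f 0) * deriv f 0 := by
    have h := deriv_comp 0 ((hF1a (f 0) hm0).differentiableAt) hdf0
    simpa [Function.comp_def] using h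
  have key : deriv (fun z => (deriv (deriv F) (f z) * deriv f z) * deriv f z
      + deriv F (f z) * deriv (deriv f) z) 0
      = deriv (deriv (deriv F)) 0 + 3 * deriv (deriv F) 0 * deriv (deriv f) 0
        + deriv (deriv (deriv f)) 0 := by
    rw [deriv_fun_add ((hdF2f0.fun_mul hdf1).fun_mul hdf1) (hdF1f.fun_mul hdf2)]
    rw [deriv_fun_mul (hdF2f0.fun_mul hdf1) hdf1]
    rw [deriv_fun_mul hdF2f0 hdf1]
    rw [deriv_fun_mul hdF1f hdf2]
    rw [c1, c2, hf0, hf1, hF1]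
    ring
  refine ⟨hF1, hF2, ?_⟩
  rw [key] at hzero
  rw [hF2] at hzero
  linear_combination hzero
lemma key_ineq {b c u v : ℝ} (hb : 0 < b) (hu1 : b^2 - 2*c ≤ u) (hu2 : 2*c - b^2 ≤ u)
    (hv1 : c - b ≤ v) (hv2 : b - c ≤ v) : 3*b^3 ≤ (u + 2*b)*(b^2 + b + v) := by
  have hu0 : 0 ≤ u := by linarith
  have hv0 : 0 ≤ v := by linarith
  nlinarith [mul_nonneg hu0 hv0, mul_nonneg hu0 hb.le, sq_nonneg (b-2), sq_nonneg (b-1),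
    mul_nonneg (mul_nonneg hb.le hb.le) hv0, mul_nonneg hb.le hv0, sq_nonneg b,
    mul_nonneg hu0 (mul_nonneg hb.le hb.le), mul_nonneg (mul_nonneg hb.le hb.le) hb.le]
/-- `g` is subordinate to `h` on the unit disk: there is an analytic `ω : 𝔻 → 𝔻`
with `ω 0 = 0` such that `g = h ∘ ω` on `𝔻`. -/
def Subordinate (g h : ℂ → ℂ) : Prop :=
  ∃ ω : ℂ → ℂ, DifferentiableOn ℂ ω (ball 0 1) ∧ ω 0 = 0 ∧
    (∀ z ∈ ball (0 : ℂ) 1, ω z ∈ ball (0 : ℂ) 1) ∧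
    ∀ z ∈ ball (0 : ℂ) 1, g z = h (ω z)

theorem stmt8
    (f F : ℂ → ℂ)
    (hf : DifferentiableOn ℂ f (ball 0 1)) (hf0 : f 0 = 0) (hf1 : deriv f 0 = 1)
    (hfi : InjOn f (ball 0 1))
    (hF : DifferentiableOn ℂ F (ball 0 1)) (hF0 : F 0 = 0) (hFi : InjOn F (ball 0 1))
    (hFf : ∀ᶠ z in nhds (0 : ℂ), F (f z) = z)
    (φ : ℂ → ℂ) (B₁ B₂ : ℝ)
    (hφ : DifferentiableOn ℂ φ (ball 0 1)) (hφ0 : φ 0 = 1)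
    (hB₁ : 0 < B₁) (hφ1 : deriv φ 0 = (B₁ : ℂ)) (hφ2 : iteratedDeriv 2 φ 0 = 2 * (B₂ : ℂ))
    (hfsub : Subordinate (fun z => 1 + z * deriv (deriv f) z / deriv f z) φ)
    (hFsub : Subordinate (fun w => 1 + w * deriv (deriv F) w / deriv F w) φ) :
    ‖iteratedDeriv 2 f 0 / 2‖ ≤ min (Real.sqrt ((B₁ ^ 2 + B₁ + |B₂ - B₁|) / 6)) (B₁ / 2) := by
  obtain ⟨ω, hωd, hω0, hωm, hωeq⟩ := hfsub
  obtain ⟨W, hWd, hW0, hWm, hWeq⟩ := hFsub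
  obtain ⟨hF1, hF2, hF3⟩ := inverse_coeffs hf hf0 hf1 hF hFf
  obtain ⟨Eq1, Eq2⟩ := subord_coeffs hf hf1 hφ hφ1 hφ2 hωd hω0 hωm
    (fun z hz => by simpa using hωeq z hz)
  obtain ⟨Eq3, Eq4⟩ := subord_coeffs hF hF1 hφ hφ1 hφ2 hWd hW0 hWm
    (fun z hz => by simpa using hWeq z hz)
  obtain ⟨hk1, hk2⟩ := schwarz_coeffs hωd hω0 hωm
  obtain ⟨hl1, hl2⟩ := schwarz_coeffs hWd hW0 hWm
  set p := deriv (deriv f) 0 with hp_def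
  set q := deriv (deriv (deriv f)) 0 with hq_def
  set k₁ := deriv ω 0 with hk₁_def
  set k₂ := deriv (deriv ω) 0 with hk₂_def
  set l₁ := deriv W 0 with hl₁_def
  set l₂ := deriv (deriv W) 0 with hl₂_def
  have hiter : iteratedDeriv 2 f 0 = p := by
    rw [iteratedDeriv_succ, iteratedDeriv_one]
  rw [hiter]
  have hB1C : ((B₁:ℝ):ℂ) ≠ 0 := by
    simp only [ne_eq, Complex.ofReal_eq_zero]; exact hB₁.ne'
  -- l₁ = -k₁
  have hl1k : l₁ = -k₁ := by
    have h : (B₁:ℂ) * l₁ = (B₁:ℂ) * (-k₁) := by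
      rw [← Eq3, hF2, Eq1]; ring
    exact mul_left_cancel₀ hB1C h
  -- main complex identity
  have hmain : 2*p^2*((B₁:ℝ):ℂ)^2 - 4*((B₂:ℝ):ℂ)*p^2 = ((B₁:ℝ):ℂ)^3*(k₂+l₂) := by
    rw [hF3, hF2] at Eq4
    linear_combination ((B₁:ℝ):ℂ)^2*Eq2 + ((B₁:ℝ):ℂ)^2*Eq4
      + 2*((B₂:ℝ):ℂ)*((B₁:ℝ):ℂ)^2*(l₁-k₁)*(by rw [hl1k]; ring : l₁ + k₁ = (0:ℂ))
      - 4*((B₂:ℝ):ℂ)*(p+((B₁:ℝ):ℂ)*k₁)*Eq1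
  -- pass to absolute values
  set K := ‖k₁‖ with hK_def
  have hK0 : 0 ≤ K := norm_nonneg _
  have habsp : ‖p‖ = B₁ * K := by
    rw [Eq1, norm_mul, Complex.norm_real, Real.norm_eq_abs, abs_of_pos hB₁]
  have hl1abs : ‖l₁‖ = K := by rw [hl1k, norm_neg]
  have habsL : ‖2*p^2*((B₁:ℝ):ℂ)^2 - 4*((B₂:ℝ):ℂ)*p^2‖
      = |2*B₁^2 - 4*B₂| * (B₁*K)^2 := by
    have : 2*p^2*((B₁:ℝ):ℂ)^2 - 4*((B₂:ℝ):ℂ)*p^2 = (((2*B₁^2 - 4*B₂ : ℝ)):ℂ) * p^2 := by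
      push_cast; ring
    rw [this, norm_mul, Complex.norm_real, Real.norm_eq_abs, norm_pow, habsp]
  have habsR : ‖((B₁:ℝ):ℂ)^3*(k₂+l₂)‖ ≤ B₁^3 * (4 - 4*K^2) := by
    rw [norm_mul, norm_pow, Complex.norm_real, Real.norm_eq_abs, abs_of_pos hB₁]
    have htri : ‖k₂ + l₂‖ ≤ ‖k₂‖ + ‖l₂‖ :=
      norm_add_le _ _
    have h2 : ‖k₂‖ + ‖l₂‖ ≤ 4 - 4*K^2 := by
      rw [hl1abs] at hl2
      calc ‖k₂‖ + ‖l₂‖ ≤ 2*(1-K^2) + 2*(1-K^2) := add_le_add hk2 hl2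
        _ = 4 - 4*K^2 := by ring
    have hb3 : (0:ℝ) ≤ B₁^3 := by positivity
    calc B₁^3 * ‖k₂+l₂‖ ≤ B₁^3 * (‖k₂‖ + ‖l₂‖) := by
          exact mul_le_mul_of_nonneg_left htri hb3
      _ ≤ B₁^3 * (4 - 4*K^2) := mul_le_mul_of_nonneg_left h2 hb3
  have hreal : |2*B₁^2 - 4*B₂| * (B₁*K)^2 ≤ B₁^3 * (4 - 4*K^2) := by
    rw [← habsL, hmain]; exact habsR
  -- set u, v
  set u := |B₁^2 - 2*B₂| with hu_def
  set v := |B₂ - B₁| with hv_def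
  have h2u : |2*B₁^2 - 4*B₂| = 2*u := by
    rw [hu_def, show 2*B₁^2 - 4*B₂ = 2*(B₁^2 - 2*B₂) by ring, abs_mul]
    norm_num
  have hT : B₁^2*K^2*(u + 2*B₁) ≤ 2*B₁^3 := by nlinarith [hreal, h2u]
  have hkey : 3*B₁^3 ≤ (u + 2*B₁)*(B₁^2 + B₁ + v) := by
    apply key_ineq hB₁
    · exact le_abs_self _
    · rw [hu_def]; linarith [neg_le_abs (B₁^2 - 2*B₂)]
    · exact le_abs_self _
    · rw [hv_def]; linarith [neg_le_abs (B₂ - B₁)]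
  have hu0 : 0 ≤ u := abs_nonneg _
  have hup : 0 < u + 2*B₁ := by linarith
  have hfin : 3*(B₁^2*K^2) ≤ 2*(B₁^2 + B₁ + v) := by nlinarith [hT, hkey, hup]
  have habsp2 : ‖p/2‖ = B₁*K/2 := by
    rw [norm_div, habsp, Complex.norm_two]
  rw [habsp2]
  apply le_min
  · have h1 : B₁*K/2 = Real.sqrt ((B₁*K/2)^2) := (Real.sqrt_sq (by positivity)).symm
    rw [h1]
    apply Real.sqrt_le_sqrt
    nlinarith [hfin, sq_nonneg (B₁*K)]
  · have h2 : B₁ * K ≤ B₁ := mul_le_of_le_one_right hB₁.le hk1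
    linarith
end
end

section
/- Let f be bi-univalent with inverse extension F. If 1 + zf''(z)/f'(z) ≺ φ(z) and F'(w) ≺ φ(w), then the third Taylor coefficient of f satisfies |a₃| ≤ 5(B₁ + |B₂ − B₁|)/12. -/
open Metric Set Complex

noncomputable section

lemma anDeriv {f : ℂ → ℂ} {x : ℂ} (h : AnalyticAt ℂ f x) : AnalyticAt ℂ (deriv f) x := by
  have h' : AnalyticOnNhd ℂ f {x} := fun y hy => by simp at hy; exact hy ▸ h
  exact h'.deriv x rfl

lemma schwarz_coeff (ω : ℂ → ℂ) (hω : DifferentiableOn ℂ ω (ball 0 1)) (hω0 : ω 0 = 0)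
    (hmap : ∀ z ∈ ball (0:ℂ) 1, ω z ∈ ball (0:ℂ) 1) :
    ‖deriv ω 0‖ ≤ 1 ∧
    ‖iteratedDeriv 2 ω 0 / 2 + (deriv ω 0) ^ 2‖ ≤ 1 := by
  have h0ball : (0:ℂ) ∈ ball (0:ℂ) 1 := by simp
  have hωa : AnalyticAt ℂ ω 0 := (hω.analyticOnNhd isOpen_ball) 0 h0ball
  set u : ℂ → ℂ := dslope ω 0 with hu
  obtain ⟨p, hp⟩ := hωa
  have hua : AnalyticAt ℂ u 0 := hp.has_fpower_series_dslope_fslope.analyticAt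
  have hub : ∀ z ∈ ball (0:ℂ) 1, ‖u z‖ ≤ 1 := by
    intro z hz
    have := Complex.norm_dslope_le_div_of_mapsTo_ball hω (fun x hx => by rw [hω0]; exact ball_subset_closedBall (hmap x hx)) hz
    simpa using this
  have hudiff : DifferentiableOn ℂ u (ball 0 1) := by
    intro z hz
    rcases eq_or_ne z 0 with rfl | hz0
    · exact hua.differentiableAt.differentiableWithinAt
    · exact ((differentiableAt_dslope_of_ne hz0).mpr
        (hω.differentiableAt (isOpen_ball.mem_nhds hz))).differentiableWithinAt
  have hu0 : u 0 = deriv ω 0 := dslope_same ω 0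
  have habs1 : ‖deriv ω 0‖ ≤ 1 := by
    have := hub 0 h0ball; rw [hu0] at this; simpa using this
  -- ω z = z * u z
  have hωeq : ω = fun z => z * u z := by
    funext z
    have := sub_smul_dslope ω 0 z
    simp only [sub_zero, smul_eq_mul, hω0] at this
    exact this.symm
  -- iteratedDeriv 2 ω 0 = 2 * deriv u 0
  have hEd : deriv ω =ᶠ[nhds 0] fun z => u z + z * deriv u z := by
    filter_upwards [hua.eventually_analyticAt] with z hz
    rw [hωeq]
    rw [deriv_fun_mul differentiableAt_fun_id hz.differentiableAt]
    simp
  have hDu : DifferentiableAt ℂ u 0 := hua.differentiableAt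
  have hDdu : DifferentiableAt ℂ (deriv u) 0 := (anDeriv hua).differentiableAt
  have hit2 : iteratedDeriv 2 ω 0 = 2 * deriv u 0 := by
    have : iteratedDeriv 2 ω 0 = deriv (deriv ω) 0 := by
      simp [iteratedDeriv_succ, iteratedDeriv_zero]
    rw [this, hEd.deriv_eq]
    rw [deriv_fun_add hDu (differentiableAt_fun_id.fun_mul hDdu),
      deriv_fun_mul differentiableAt_fun_id hDdu]
    simp
    ring
  -- Schwarz-Pick at 0 for u
  have hpick : ‖deriv u 0‖ ≤ 1 - ‖u 0‖ ^ 2 := by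
    rcases lt_or_eq_of_le (by rw [hu0]; exact habs1 : ‖u 0‖ ≤ 1) with hlt | heq1
    · -- Möbius trick
      set a : ℂ := u 0 with ha
      have hna : Complex.normSq a < 1 := by
        rw [← Complex.sq_norm]
        nlinarith [norm_nonneg a]
      set g : ℂ → ℂ := fun z => (u z - a) / (1 - (starRingEnd ℂ) a * u z) with hg
      have hden : ∀ z ∈ ball (0:ℂ) 1, (1 - (starRingEnd ℂ) a * u z) ≠ 0 := by
        intro z hz h
        have h1 : (1:ℂ) = (starRingEnd ℂ) a * u z := by linear_combination h
        have : ‖(starRingEnd ℂ) a * u z‖ ≤ ‖a‖ * 1 := by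
          rw [norm_mul, Complex.norm_conj]
          exact mul_le_mul_of_nonneg_left (by simpa using hub z hz)
            (norm_nonneg a)
        rw [← h1] at this
        simp at this
        nlinarith [norm_nonneg a, Complex.sq_norm a]
      have hgb : ∀ z ∈ ball (0:ℂ) 1, ‖g z‖ ≤ 1 := by
        intro z hz
        have hkey : Complex.normSq (1 - (starRingEnd ℂ) a * u z) - Complex.normSq (u z - a)
            = (1 - Complex.normSq a) * (1 - Complex.normSq (u z)) := by
          simp only [Complex.normSq_apply, Complex.sub_re, Complex.sub_im, Complex.mul_re,
            Complex.mul_im, Complex.one_re, Complex.one_im, Complex.conj_re, Complex.conj_im]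
          ring
        have huz : Complex.normSq (u z) ≤ 1 := by
          have := hub z hz
          nlinarith [Complex.sq_norm (u z), norm_nonneg (u z)]
        have hge : Complex.normSq (u z - a) ≤ Complex.normSq (1 - (starRingEnd ℂ) a * u z) := by
          nlinarith
        rw [hg]
        rw [norm_div]
        rw [div_le_one (by
          have := hden z hz
          exact norm_pos_iff.mpr this)]
        rw [← Real.sqrt_le_sqrt_iff (Complex.normSq_nonneg _)] at hge
        · simpa [Complex.norm_def] using hge
      have hg0 : g 0 = 0 := by simp [hg, ← ha]
      have hgdiff : DifferentiableOn ℂ g (ball 0 1) := by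
        apply DifferentiableOn.div
        · exact hudiff.sub (differentiableOn_const a)
        · exact (differentiableOn_const 1).sub ((differentiableOn_const _).mul hudiff)
        · exact hden
      have hgd1 : ‖deriv g 0‖ ≤ 1 := by
        apply le_of_forall_pos_le_add
        intro ε hε
        have hmapg : MapsTo g (ball (0:ℂ) 1) (ball (g 0) (1 + ε)) := by
          intro z hz
          rw [hg0, mem_ball, dist_zero_right]
          exact lt_of_le_of_lt (hgb z hz) (by linarith)
        have := Complex.norm_deriv_le_div_of_mapsTo_ball hgdiff (hmapg.mono_right ball_subset_closedBall) one_pos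
        simpa using this
      -- deriv g 0 = deriv u 0 / (1 - normSq a)
      have hden0 : (1 - (starRingEnd ℂ) a * a) ≠ 0 := by
        have : (starRingEnd ℂ) a * a = (Complex.normSq a : ℂ) := by
          rw [mul_comm, Complex.mul_conj]
        rw [this]
        intro h
        have : (Complex.normSq a : ℂ) = 1 := by linear_combination -h
        rw [Complex.ofReal_eq_one] at this
        linarith
      have hderg : deriv g 0 = deriv u 0 / (1 - (starRingEnd ℂ) a * a) := by
        rw [hg]
        rw [deriv_fun_div (hDu.sub_const a)
          ((differentiableAt_const (1:ℂ)).fun_sub ((differentiableAt_const _).fun_mul hDu))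
          (by rw [← ha]; exact hden0)]
        rw [deriv_sub_const, deriv_const_sub, deriv_const_mul _ hDu, ← ha]
        field_simp
        ring
      have hcs : ‖1 - (starRingEnd ℂ) a * a‖ = 1 - Complex.normSq a := by
        have : (1 - (starRingEnd ℂ) a * a) = ((1 - Complex.normSq a : ℝ) : ℂ) := by
          push_cast
          rw [mul_comm, Complex.mul_conj]
        rw [this, Complex.norm_real, Real.norm_eq_abs, abs_of_pos (by linarith)]
      have : ‖deriv u 0‖ = ‖deriv g 0‖ * (1 - Complex.normSq a) := by
        rw [hderg, norm_div, hcs, div_mul_cancel₀]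
        intro h; rw [h] at hcs; simp at hcs; linarith
      rw [this, ← Complex.sq_norm]
      have hpos : (0:ℝ) ≤ 1 - ‖a‖ ^ 2 := by nlinarith [norm_nonneg a]
      calc ‖deriv g 0‖ * (1 - ‖a‖ ^ 2)
          ≤ 1 * (1 - ‖a‖ ^ 2) := mul_le_mul_of_nonneg_right hgd1 hpos
        _ = 1 - ‖a‖ ^ 2 := one_mul _
    · -- |u 0| = 1 : max modulus, u constant
      have hmax : IsMaxOn (norm ∘ u) (ball (0:ℂ) 1) 0 := by
        intro z hz
        simp only [Function.comp_apply, Set.mem_setOf_eq]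
        rw [heq1]
        simpa using hub z hz
      have hconst : EqOn u (fun _ => u 0) (ball (0:ℂ) 1) :=
        Complex.eqOn_of_isPreconnected_of_isMaxOn_norm (convex_ball _ _).isPreconnected
          isOpen_ball hudiff h0ball hmax
      have : deriv u 0 = 0 := by
        have hev : u =ᶠ[nhds 0] (fun _ => u 0) :=
          Filter.eventuallyEq_of_mem (isOpen_ball.mem_nhds h0ball) hconst
        rw [hev.deriv_eq, deriv_const]
      rw [this, heq1]
      simp
  refine ⟨habs1, ?_⟩
  rw [hit2, ← hu0]
  have : (2 : ℂ) * deriv u 0 / 2 = deriv u 0 := by ring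
  rw [this]
  calc ‖deriv u 0 + u 0 ^ 2‖ ≤ ‖deriv u 0‖ + ‖u 0 ^ 2‖ :=
        norm_add_le _ _
    _ ≤ (1 - ‖u 0‖ ^ 2) + ‖u 0‖ ^ 2 := by
        rw [norm_pow]; exact add_le_add hpick le_rfl
    _ = 1 := by ring

lemma evDerivComp (h ω : ℂ → ℂ) (hh : AnalyticAt ℂ h (ω 0)) (hω : AnalyticAt ℂ ω 0) :
    deriv (fun z => h (ω z)) =ᶠ[nhds 0] fun z => deriv h (ω z) * deriv ω z := by
  filter_upwards [hω.eventually_analyticAt,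
    hω.continuousAt.eventually hh.eventually_analyticAt] with z hz1 hz2
  exact deriv_comp z hz2.differentiableAt hz1.differentiableAt

lemma comp3 (h ω : ℂ → ℂ) (hh : AnalyticAt ℂ h (ω 0)) (hω : AnalyticAt ℂ ω 0) :
    deriv (fun z => h (ω z)) 0 = deriv h (ω 0) * deriv ω 0 ∧
    iteratedDeriv 2 (fun z => h (ω z)) 0
      = iteratedDeriv 2 h (ω 0) * (deriv ω 0) ^ 2 + deriv h (ω 0) * iteratedDeriv 2 ω 0 ∧
    iteratedDeriv 3 (fun z => h (ω z)) 0
      = iteratedDeriv 3 h (ω 0) * (deriv ω 0) ^ 3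
        + 3 * iteratedDeriv 2 h (ω 0) * (deriv ω 0 * iteratedDeriv 2 ω 0)
        + deriv h (ω 0) * iteratedDeriv 3 ω 0 := by
  have hA : AnalyticAt ℂ (fun z => deriv h (ω z)) 0 := (anDeriv hh).comp hω
  have hB : AnalyticAt ℂ (deriv ω) 0 := anDeriv hω
  have hC : AnalyticAt ℂ (fun z => deriv (deriv h) (ω z)) 0 := (anDeriv (anDeriv hh)).comp hω
  have hD : AnalyticAt ℂ (deriv (deriv ω)) 0 := anDeriv hB
  have hE : AnalyticAt ℂ (fun z => deriv (deriv (deriv h)) (ω z)) 0 :=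
    (anDeriv (anDeriv (anDeriv hh))).comp hω
  have dA : deriv (fun z => deriv h (ω z)) 0 = deriv (deriv h) (ω 0) * deriv ω 0 :=
    deriv_comp 0 (anDeriv hh).differentiableAt hω.differentiableAt
  have dC : deriv (fun z => deriv (deriv h) (ω z)) 0
      = deriv (deriv (deriv h)) (ω 0) * deriv ω 0 :=
    deriv_comp 0 (anDeriv (anDeriv hh)).differentiableAt hω.differentiableAt
  have E1 : deriv (fun z => h (ω z)) =ᶠ[nhds 0] fun z => deriv h (ω z) * deriv ω z :=
    evDerivComp h ω hh hω
  have i2 : ∀ (F : ℂ → ℂ) (x : ℂ), iteratedDeriv 2 F x = deriv (deriv F) x := fun F x => by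
    simp [iteratedDeriv_succ, iteratedDeriv_zero]
  have i3 : ∀ (F : ℂ → ℂ) (x : ℂ), iteratedDeriv 3 F x = deriv (deriv (deriv F)) x := fun F x => by
    simp [iteratedDeriv_succ, iteratedDeriv_zero]
  refine ⟨E1.eq_of_nhds, ?_, ?_⟩
  · simp only [i2]
    rw [E1.deriv_eq, deriv_fun_mul hA.differentiableAt hB.differentiableAt, dA]
    ring
  · -- second eventual identity
    have E2 : deriv (fun z => deriv h (ω z) * deriv ω z) =ᶠ[nhds 0]
        fun z => deriv (deriv h) (ω z) * deriv ω z * deriv ω z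
          + deriv h (ω z) * deriv (deriv ω) z := by
      have E2a : deriv (fun z => deriv h (ω z)) =ᶠ[nhds 0]
          fun z => deriv (deriv h) (ω z) * deriv ω z := evDerivComp (deriv h) ω (anDeriv hh) hω
      filter_upwards [hA.eventually_analyticAt, hB.eventually_analyticAt, E2a] with z h1 h2 h3
      rw [deriv_fun_mul h1.differentiableAt h2.differentiableAt, h3]
    have E3 : deriv (deriv (fun z => h (ω z))) =ᶠ[nhds 0]
        fun z => deriv (deriv h) (ω z) * deriv ω z * deriv ω z
          + deriv h (ω z) * deriv (deriv ω) z := E1.deriv.trans E2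
    simp only [i2, i3]
    rw [E3.deriv_eq]
    rw [deriv_fun_add ((hC.fun_mul hB).fun_mul hB).differentiableAt (hA.fun_mul hD).differentiableAt]
    rw [deriv_fun_mul (hC.fun_mul hB).differentiableAt hB.differentiableAt]
    rw [deriv_fun_mul hC.differentiableAt hB.differentiableAt]
    rw [deriv_fun_mul hA.differentiableAt hD.differentiableAt]
    rw [dA, dC]
    ring



theorem stmt12
    (f F : ℂ → ℂ)
    (hf : DifferentiableOn ℂ f (ball 0 1)) (hf0 : f 0 = 0) (hf1 : deriv f 0 = 1)
    (hfi : InjOn f (ball 0 1))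
    (hF : DifferentiableOn ℂ F (ball 0 1)) (hF0 : F 0 = 0) (hFi : InjOn F (ball 0 1))
    (hFf : ∀ᶠ z in nhds (0 : ℂ), F (f z) = z)
    (φ : ℂ → ℂ) (B₁ B₂ : ℝ)
    (hφ : DifferentiableOn ℂ φ (ball 0 1)) (hφ0 : φ 0 = 1)
    (hB₁ : 0 < B₁) (hφ1 : deriv φ 0 = (B₁ : ℂ)) (hφ2 : iteratedDeriv 2 φ 0 = 2 * (B₂ : ℂ))
    (hfsub : Subordinate (fun z => 1 + z * deriv (deriv f) z / deriv f z) φ)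
    (hFsub : Subordinate (deriv F) φ) :
    ‖iteratedDeriv 3 f 0 / 6‖ ≤ 5 * (B₁ + |B₂ - B₁|) / 12 := by
  have h0ball : (0:ℂ) ∈ ball (0:ℂ) 1 := by simp
  have hballn : ball (0:ℂ) 1 ∈ nhds (0:ℂ) := isOpen_ball.mem_nhds h0ball
  have hfa : AnalyticAt ℂ f 0 := (hf.analyticOnNhd isOpen_ball) 0 h0ball
  have hFa : AnalyticAt ℂ F 0 := (hF.analyticOnNhd isOpen_ball) 0 h0ball
  have hφa : AnalyticAt ℂ φ 0 := (hφ.analyticOnNhd isOpen_ball) 0 h0ball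
  -- Part I : derivatives of F at 0 via F ∘ f = id
  have hFf0 : AnalyticAt ℂ F (f 0) := by rwa [hf0]
  obtain ⟨cp1, cp2, cp3⟩ := comp3 F f hFf0 hfa
  have heqid : (fun z => F (f z)) =ᶠ[nhds (0:ℂ)] fun z => z := hFf
  have did1 : deriv (fun z : ℂ => z) 0 = 1 := by simp
  have did2 : iteratedDeriv 2 (fun z : ℂ => z) (0:ℂ) = 0 := by
    simp [iteratedDeriv_succ, iteratedDeriv_one]
  have did3 : iteratedDeriv 3 (fun z : ℂ => z) (0:ℂ) = 0 := by
    simp [iteratedDeriv_succ, iteratedDeriv_one]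
  rw [heqid.deriv_eq, did1] at cp1
  rw [heqid.iteratedDeriv_eq 2, did2] at cp2
  rw [heqid.iteratedDeriv_eq 3, did3] at cp3
  rw [hf0, hf1, mul_one] at cp1    -- cp1 : 1 = deriv F 0
  rw [hf0, hf1] at cp2             -- cp2 : 0 = itD2 F 0 * 1^2 + deriv F 0 * itD2 f 0
  rw [hf0, hf1] at cp3
  have e1 : deriv F 0 = 1 := cp1.symm
  have e2 : iteratedDeriv 2 F 0 = - iteratedDeriv 2 f 0 := by
    rw [e1] at cp2; linear_combination -cp2
  have e3 : iteratedDeriv 3 F 0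
      = 3 * (iteratedDeriv 2 f 0)^2 - iteratedDeriv 3 f 0 := by
    rw [e1, e2] at cp3; linear_combination -cp3
  -- Part II : subordination of 1 + z f''/f'
  obtain ⟨ω, hωd, hω0, hωm, hωeq⟩ := hfsub
  have hωa : AnalyticAt ℂ ω 0 := (hωd.analyticOnNhd isOpen_ball) 0 h0ball
  have hφω0 : AnalyticAt ℂ φ (ω 0) := by rwa [hω0]
  obtain ⟨sp1, sp2, -⟩ := comp3 φ ω hφω0 hωa
  have hgeq : (fun z => 1 + z * deriv (deriv f) z / deriv f z)
      =ᶠ[nhds (0:ℂ)] fun z => φ (ω z) := Filter.eventuallyEq_of_mem hballn hωeq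
  -- derivatives of g := 1 + z f''/f'
  have h1On : AnalyticOnNhd ℂ (deriv f) (ball 0 1) :=
    (hf.analyticOnNhd isOpen_ball).deriv_of_isOpen isOpen_ball
  have h2On : AnalyticOnNhd ℂ (deriv (deriv f)) (ball 0 1) :=
    h1On.deriv_of_isOpen isOpen_ball
  have hA1 : AnalyticAt ℂ (deriv f) 0 := h1On 0 h0ball
  have hA2 : AnalyticAt ℂ (deriv (deriv f)) 0 := h2On 0 h0ball
  have hA3 : AnalyticAt ℂ (deriv (deriv (deriv f))) 0 := anDeriv hA2
  have hA4 : AnalyticAt ℂ (deriv (deriv (deriv (deriv f)))) 0 := anDeriv hA3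
  have hne : ∀ᶠ z in nhds (0:ℂ), deriv f z ≠ 0 := by
    apply hA1.continuousAt.eventually_ne
    rw [hf1]; exact one_ne_zero
  have Eg : deriv (fun z => 1 + z * deriv (deriv f) z / deriv f z) =ᶠ[nhds (0:ℂ)]
      fun z => ((deriv (deriv f) z + z * deriv (deriv (deriv f)) z) * deriv f z
        - z * deriv (deriv f) z * deriv (deriv f) z) / (deriv f z * deriv f z) := by
    filter_upwards [hballn, hne] with z hz hnz
    have d1 : DifferentiableAt ℂ (deriv f) z := (h1On z hz).differentiableAt
    have d2 : DifferentiableAt ℂ (deriv (deriv f)) z := (h2On z hz).differentiableAt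
    have dnum : DifferentiableAt ℂ (fun x => x * deriv (deriv f) x) z :=
      differentiableAt_fun_id.mul d2
    rw [deriv_const_add, deriv_fun_div dnum d1 hnz, deriv_fun_mul differentiableAt_fun_id d2]
    simp only [deriv_id'', one_mul]
    ring
  have hg1 : deriv (fun z => 1 + z * deriv (deriv f) z / deriv f z) 0
      = iteratedDeriv 2 f 0 := by
    rw [Eg.eq_of_nhds, hf1]
    simp [iteratedDeriv_succ, iteratedDeriv_zero]
  have hg2 : iteratedDeriv 2 (fun z => 1 + z * deriv (deriv f) z / deriv f z) 0
      = 2 * (iteratedDeriv 3 f 0 - (iteratedDeriv 2 f 0)^2) := by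
    have i2g : iteratedDeriv 2 (fun z => 1 + z * deriv (deriv f) z / deriv f z) 0
        = deriv (deriv (fun z => 1 + z * deriv (deriv f) z / deriv f z)) 0 := by
      simp [iteratedDeriv_succ, iteratedDeriv_zero]
    rw [i2g, Eg.deriv_eq]
    have dI : DifferentiableAt ℂ (fun z : ℂ => z) 0 := differentiableAt_fun_id
    have d1 : DifferentiableAt ℂ (deriv f) 0 := hA1.differentiableAt
    have d2 : DifferentiableAt ℂ (deriv (deriv f)) 0 := hA2.differentiableAt
    have d3 : DifferentiableAt ℂ (deriv (deriv (deriv f))) 0 := hA3.differentiableAt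
    have dsum : DifferentiableAt ℂ
        (fun z => deriv (deriv f) z + z * deriv (deriv (deriv f)) z) 0 := by
      exact d2.add (differentiableAt_fun_id.mul d3)
    have dzu2 : DifferentiableAt ℂ (fun z => z * deriv (deriv f) z) 0 := by
      exact differentiableAt_fun_id.mul d2
    have dt1 : DifferentiableAt ℂ
        (fun z => (deriv (deriv f) z + z * deriv (deriv (deriv f)) z) * deriv f z) 0 := by
      exact dsum.mul d1
    have dt2 : DifferentiableAt ℂ
        (fun z => z * deriv (deriv f) z * deriv (deriv f) z) 0 := by
      exact dzu2.mul d2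
    have dN : DifferentiableAt ℂ
        (fun z => (deriv (deriv f) z + z * deriv (deriv (deriv f)) z) * deriv f z
          - z * deriv (deriv f) z * deriv (deriv f) z) 0 := by exact dt1.sub dt2
    have dD : DifferentiableAt ℂ (fun z => deriv f z * deriv f z) 0 := by exact d1.mul d1
    have hD0 : deriv f 0 * deriv f 0 ≠ 0 := by rw [hf1]; norm_num
    rw [deriv_fun_div dN dD hD0]
    rw [deriv_fun_sub dt1 dt2]
    rw [deriv_fun_mul dsum d1]
    rw [deriv_fun_add d2 (differentiableAt_fun_id.fun_mul d3)]
    rw [deriv_fun_mul differentiableAt_fun_id d3]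
    rw [deriv_fun_mul dzu2 d2]
    rw [deriv_fun_mul differentiableAt_fun_id d2]
    rw [deriv_fun_mul d1 d1]
    simp only [deriv_id'', one_mul, zero_mul, mul_zero, add_zero, zero_add, mul_one]
    rw [hf1]
    simp only [iteratedDeriv_succ, iteratedDeriv_zero]
    ring
  have eq1 : (iteratedDeriv 2 f 0 : ℂ) = (B₁:ℂ) * deriv ω 0 := by
    rw [← hg1, hgeq.deriv_eq, sp1, hω0, hφ1]
  have eq2 : 2 * (iteratedDeriv 3 f 0 - (iteratedDeriv 2 f 0)^2)
      = 2*(B₂:ℂ) * (deriv ω 0)^2 + (B₁:ℂ) * iteratedDeriv 2 ω 0 := by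
    rw [← hg2, hgeq.iteratedDeriv_eq 2, sp2, hω0, hφ1, hφ2]
  -- Part III : subordination of F'
  obtain ⟨ψ, hψd, hψ0, hψm, hψeq⟩ := hFsub
  have hψa : AnalyticAt ℂ ψ 0 := (hψd.analyticOnNhd isOpen_ball) 0 h0ball
  have hφψ0 : AnalyticAt ℂ φ (ψ 0) := by rwa [hψ0]
  obtain ⟨tp1, tp2, -⟩ := comp3 φ ψ hφψ0 hψa
  have hFev : deriv F =ᶠ[nhds (0:ℂ)] fun z => φ (ψ z) := Filter.eventuallyEq_of_mem hballn hψeq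
  have eq3 : -(iteratedDeriv 2 f 0 : ℂ) = (B₁:ℂ) * deriv ψ 0 := by
    have h1 : deriv (deriv F) 0 = iteratedDeriv 2 F 0 := by
      simp [iteratedDeriv_succ, iteratedDeriv_zero]
    rw [← e2, ← h1, hFev.deriv_eq, tp1, hψ0, hφ1]
  have eq4 : 3 * (iteratedDeriv 2 f 0)^2 - iteratedDeriv 3 f 0
      = 2*(B₂:ℂ) * (deriv ψ 0)^2 + (B₁:ℂ) * iteratedDeriv 2 ψ 0 := by
    have h1 : iteratedDeriv 2 (deriv F) 0 = iteratedDeriv 3 F 0 := by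
      simp [iteratedDeriv_succ, iteratedDeriv_zero]
    rw [← e3, ← h1, hFev.iteratedDeriv_eq 2, tp2, hψ0, hφ1, hφ2]
  -- Part IV : Schwarz bounds
  obtain ⟨hc1, hc2⟩ := schwarz_coeff ω hωd hω0 hωm
  obtain ⟨hd1, hd2⟩ := schwarz_coeff ψ hψd hψ0 hψm
  -- Part V : algebra
  have hB1ne : (B₁:ℂ) ≠ 0 := Complex.ofReal_ne_zero.mpr hB₁.ne'
  have hd1c : deriv ψ 0 = - deriv ω 0 := by
    have hz : (B₁:ℂ) * (deriv ψ 0 + deriv ω 0) = 0 := by linear_combination -eq1 - eq3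
    rcases mul_eq_zero.mp hz with h | h
    · exact absurd h hB1ne
    · linear_combination h
  have hd1sq : (deriv ψ 0)^2 = (deriv ω 0)^2 := by rw [hd1c]; ring
  have key : 2 * (iteratedDeriv 3 f 0 : ℂ)
      = 3*(B₁:ℂ) * (iteratedDeriv 2 ω 0 / 2 + (deriv ω 0)^2)
      + 2*(B₁:ℂ) * (iteratedDeriv 2 ψ 0 / 2 + (deriv ψ 0)^2)
      + 5*((B₂:ℂ) - (B₁:ℂ)) * (deriv ω 0)^2 := by
    linear_combination (3/2:ℂ) * eq2 + eq4 + (2*(B₂:ℂ) - 2*(B₁:ℂ)) * hd1sq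
  -- Part VI : estimates
  have t1 : ‖3*(B₁:ℂ) * (iteratedDeriv 2 ω 0 / 2 + (deriv ω 0)^2)‖ ≤ 3*B₁ := by
    rw [norm_mul]
    have h3 : ‖3*(B₁:ℂ)‖ = 3*B₁ := by
      rw [show (3*(B₁:ℂ)) = ((3*B₁ : ℝ) : ℂ) by push_cast; ring, Complex.norm_real, Real.norm_eq_abs,
        abs_of_pos (by linarith)]
    rw [h3]
    calc 3*B₁ * ‖iteratedDeriv 2 ω 0 / 2 + (deriv ω 0)^2‖
        ≤ 3*B₁ * 1 := by
          apply mul_le_mul_of_nonneg_left hc2 (by linarith)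
      _ = 3*B₁ := mul_one _
  have t2 : ‖2*(B₁:ℂ) * (iteratedDeriv 2 ψ 0 / 2 + (deriv ψ 0)^2)‖ ≤ 2*B₁ := by
    rw [norm_mul]
    have h3 : ‖2*(B₁:ℂ)‖ = 2*B₁ := by
      rw [show (2*(B₁:ℂ)) = ((2*B₁ : ℝ) : ℂ) by push_cast; ring, Complex.norm_real, Real.norm_eq_abs,
        abs_of_pos (by linarith)]
    rw [h3]
    calc 2*B₁ * ‖iteratedDeriv 2 ψ 0 / 2 + (deriv ψ 0)^2‖
        ≤ 2*B₁ * 1 := by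
          apply mul_le_mul_of_nonneg_left hd2 (by linarith)
      _ = 2*B₁ := mul_one _
  have t3 : ‖5*((B₂:ℂ) - (B₁:ℂ)) * (deriv ω 0)^2‖ ≤ 5*|B₂ - B₁| := by
    rw [norm_mul]
    have h3 : ‖5*((B₂:ℂ) - (B₁:ℂ))‖ = 5*|B₂ - B₁| := by
      rw [show (5*((B₂:ℂ) - (B₁:ℂ))) = ((5*(B₂ - B₁) : ℝ) : ℂ) by push_cast; ring,
        Complex.norm_real, Real.norm_eq_abs, abs_mul]
      norm_num
    rw [h3, norm_pow]
    calc 5*|B₂ - B₁| * ‖deriv ω 0‖ ^ 2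
        ≤ 5*|B₂ - B₁| * 1 := by
          apply mul_le_mul_of_nonneg_left _ (by positivity)
          nlinarith [norm_nonneg (deriv ω 0)]
      _ = 5*|B₂ - B₁| := mul_one _
  have habs : ‖2 * (iteratedDeriv 3 f 0 : ℂ)‖ ≤ 5*(B₁ + |B₂ - B₁|) := by
    rw [key]
    calc ‖_‖
        ≤ ‖3*(B₁:ℂ) * (iteratedDeriv 2 ω 0 / 2 + (deriv ω 0)^2)
            + 2*(B₁:ℂ) * (iteratedDeriv 2 ψ 0 / 2 + (deriv ψ 0)^2)‖
          + ‖5*((B₂:ℂ) - (B₁:ℂ)) * (deriv ω 0)^2‖ := norm_add_le _ _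
      _ ≤ (‖3*(B₁:ℂ) * (iteratedDeriv 2 ω 0 / 2 + (deriv ω 0)^2)‖
            + ‖2*(B₁:ℂ) * (iteratedDeriv 2 ψ 0 / 2 + (deriv ψ 0)^2)‖)
          + ‖5*((B₂:ℂ) - (B₁:ℂ)) * (deriv ω 0)^2‖ := by
            gcongr
            exact norm_add_le _ _
      _ ≤ (3*B₁ + 2*B₁) + 5*|B₂ - B₁| := by
            gcongr
      _ = 5*(B₁ + |B₂ - B₁|) := by ring
  have hfin : ‖iteratedDeriv 3 f 0 / 6‖
      = ‖2 * iteratedDeriv 3 f 0‖ / 12 := by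
    rw [show iteratedDeriv 3 f 0 / 6 = 2 * iteratedDeriv 3 f 0 / 12 by ring, norm_div]
    norm_num
  rw [hfin]
  rw [div_le_div_iff₀ (by norm_num) (by norm_num)]
  nlinarith [habs]
end
end
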